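/- Let h : ℝ^d → ℝ^k be measurable with ‖h(z)‖₂ ≤ F for all z ∈ ℝ^d, let σ > 0, and let g be the smoothed embedding g(x) = E_{z∼N(0,σ²I_d)}[h(x+z)]. Then for all x, y ∈ ℝ^d: ‖g(x) − g(y)‖₂ ≤ 2F·(Φ(‖x−y‖₂/(2σ)) − Φ(−‖x−y‖₂/(2σ))). -/

import Mathlib

open MeasureTheory ProbabilityTheory

/-- Minimum margin of `x` w.r.t. embedding `h`, positive reference set `P` and
negative reference set `N`. -/
noncomputable def margin {d k : ℕ}
    (h : EuclideanSpace ℝ (Fin d) → EuclideanSpace ℝ (Fin k))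
    (P N : Finset (EuclideanSpace ℝ (Fin d))) (hP : P.Nonempty) (hN : N.Nonempty)
    (x : EuclideanSpace ℝ (Fin d)) : ℝ :=
  N.inf' hN (fun y => ‖h x - h y‖) - P.inf' hP (fun y => ‖h x - h y‖)
/-- The centered Gaussian measure `N(0, σ² I_d)` on `ℝ^d`, the `d`-fold product of `N(0, σ²)`. -/
noncomputable def gaussPi (d : ℕ) (σ : ℝ) : Measure (EuclideanSpace ℝ (Fin d)) :=
  (Measure.pi fun _ : Fin d => gaussianReal 0 (Real.toNNReal (σ ^ 2))).map
    (EuclideanSpace.equiv (Fin d) ℝ).symm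
/-- The standard normal cumulative distribution function. -/
noncomputable def Phi (x : ℝ) : ℝ :=
  (Real.sqrt (2 * Real.pi))⁻¹ * ∫ t in Set.Iic x, Real.exp (-t ^ 2 / 2)

open Finset Real
open scoped ENNReal NNReal RealInnerProductSpace

namespace SmoothAux

theorem lintegral_pi_prod' {d : ℕ} (μ : Fin d → Measure ℝ) [∀ i, SigmaFinite (μ i)]
    (f : Fin d → ℝ → ℝ≥0∞) (hf : ∀ i, Measurable (f i)) :
    ∫⁻ x, ∏ i, f i (x i) ∂Measure.pi μ = ∏ i, ∫⁻ t, f i t ∂μ i := by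
  have hmeas : Measurable fun x : Fin d → ℝ => ∏ i, f i (x i) :=
    Finset.measurable_prod _ fun i _ => (hf i).comp (measurable_pi_apply i)
  have key : ∀ s : Finset (Fin d), ∀ x : Fin d → ℝ,
      (∫⋯∫⁻_s, (fun x => ∏ i, f i (x i)) ∂μ) x
        = (∏ i ∈ s, ∫⁻ t, f i t ∂μ i) * ∏ i ∈ sᶜ, f i (x i) := by
    intro s
    induction s using Finset.induction_on with
    | empty => intro x; simp
    | @insert i s hi ih =>
      intro x
      rw [MeasureTheory.lmarginal_insert _ hmeas hi]
      simp only [ih]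
      have hic : i ∈ sᶜ := Finset.mem_compl.2 hi
      have hsplit : ∀ t : ℝ, ∏ j ∈ sᶜ, f j (Function.update x i t j)
          = f i t * ∏ j ∈ sᶜ.erase i, f j (x j) := by
        intro t
        rw [← Finset.mul_prod_erase _ _ hic, Function.update_self]
        congr 1
        exact Finset.prod_congr rfl fun j hj =>
          by rw [Function.update_of_ne (Finset.ne_of_mem_erase hj)]
      simp only [hsplit]
      rw [lintegral_const_mul _ (by exact ((hf i).mul measurable_const))]
      · rw [lintegral_mul_const _ (hf i)]
        have : (insert i s)ᶜ = sᶜ.erase i := by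
          ext j; simp [Finset.mem_erase, and_comm]
        rw [this, Finset.prod_insert hi]
        ring
  calc ∫⁻ x, ∏ i, f i (x i) ∂Measure.pi μ
      = (∫⋯∫⁻_Finset.univ, (fun x => ∏ i, f i (x i)) ∂μ) (fun _ => 0) :=
        MeasureTheory.lintegral_eq_lmarginal_univ _
    _ = _ := by rw [key]; simp

theorem map_withDensity_equiv {α β : Type*} [MeasurableSpace α] [MeasurableSpace β]
    (μ : Measure α) (e : α ≃ᵐ β) (ρ : α → ℝ≥0∞) (hρ : Measurable ρ) :
    (μ.withDensity ρ).map e = (μ.map e).withDensity (fun b => ρ (e.symm b)) := by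
  ext s hs
  rw [Measure.map_apply e.measurable hs, withDensity_apply _ (e.measurable hs),
    withDensity_apply _ hs, Measure.restrict_map e.measurable hs,
    lintegral_map (f := fun b => ρ (e.symm b)) (hρ.comp e.symm.measurable) e.measurable]
  simp


variable {d : ℕ} {σ : ℝ}

/-- The density of the standard `d`-dimensional Gaussian with variance `σ²`. -/
noncomputable def phiD (d : ℕ) (σ : ℝ) (z : EuclideanSpace ℝ (Fin d)) : ℝ :=
  ((Real.sqrt (2 * π * σ ^ 2))⁻¹) ^ d * Real.exp (-‖z‖ ^ 2 / (2 * σ ^ 2))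

theorem phiD_nonneg (z : EuclideanSpace ℝ (Fin d)) : 0 ≤ phiD d σ z := by
  unfold phiD; positivity

theorem phiD_continuous : Continuous (phiD d σ) := by
  unfold phiD
  exact continuous_const.mul
    (Real.continuous_exp.comp (((continuous_norm.pow 2).neg).div_const _))

theorem prod_gaussianPDFReal (hσ : 0 < σ) (z : EuclideanSpace ℝ (Fin d)) :
    ∏ i, gaussianPDFReal 0 (Real.toNNReal (σ ^ 2)) (z i) = phiD d σ z := by
  have hs : ((Real.toNNReal (σ ^ 2) : ℝ≥0) : ℝ) = σ ^ 2 := Real.coe_toNNReal _ (sq_nonneg σ)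
  have hnorm : ‖z‖ ^ 2 = ∑ i, (z i) ^ 2 := by
    rw [EuclideanSpace.norm_eq, Real.sq_sqrt]
    · simp [sq_abs]
    · positivity
  unfold gaussianPDFReal
  rw [Finset.prod_mul_distrib, Finset.prod_const, ← Real.exp_sum]
  simp only [hs, sub_zero, Finset.card_univ, Fintype.card_fin]
  unfold phiD
  congr 1
  rw [hnorm, ← Finset.sum_div, ← Finset.sum_neg_distrib]

theorem pi_gaussian_eq (hσ : 0 < σ) :
    (Measure.pi fun _ : Fin d => gaussianReal 0 (Real.toNNReal (σ ^ 2)))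
      = (volume : Measure (Fin d → ℝ)).withDensity
          (fun w => ∏ i, gaussianPDF 0 (Real.toNNReal (σ ^ 2)) (w i)) := by
  classical
  set s : ℝ≥0 := Real.toNNReal (σ ^ 2) with hsdef
  have hs0 : s ≠ 0 := by
    simp only [hsdef, ne_eq, Real.toNNReal_eq_zero, not_le]
    positivity
  apply Measure.pi_eq
  intro A hA
  rw [withDensity_apply _ (MeasurableSet.univ_pi hA), ← lintegral_indicator
    (MeasurableSet.univ_pi hA)]
  have hind : (Set.pi Set.univ A).indicator (fun w => ∏ i, gaussianPDF 0 s (w i))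
      = fun w => ∏ i, (A i).indicator (gaussianPDF 0 s) (w i) := by
    funext w
    by_cases hw : w ∈ Set.pi Set.univ A
    · rw [Set.indicator_of_mem hw]
      exact Finset.prod_congr rfl fun i _ =>
        (Set.indicator_of_mem (hw i (Set.mem_univ i)) _).symm
    · rw [Set.indicator_of_notMem hw]
      have hex : ∃ i, w i ∉ A i := by
        by_contra hc
        push_neg at hc
        exact hw fun i _ => hc i
      obtain ⟨i, hi⟩ := hex
      symm
      apply Finset.prod_eq_zero (Finset.mem_univ i)
      rw [Set.indicator_of_notMem hi]
  rw [hind, show (volume : Measure (Fin d → ℝ)) = Measure.pi fun _ => volume from volume_pi,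
    lintegral_pi_prod' _ _ (fun i => (measurable_gaussianPDF 0 s).indicator (hA i))]
  refine Finset.prod_congr rfl fun i _ => ?_
  rw [gaussianReal_of_var_ne_zero 0 hs0, withDensity_apply _ (hA i),
    ← lintegral_indicator (hA i)]


theorem gaussPi_eq (hσ : 0 < σ) :
    gaussPi d σ = (volume : Measure (EuclideanSpace ℝ (Fin d))).withDensity
      (fun z => ENNReal.ofReal (phiD d σ z)) := by
  have hmeasD : Measurable fun w : Fin d → ℝ =>
      ∏ i, gaussianPDF 0 (Real.toNNReal (σ ^ 2)) (w i) :=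
    Finset.measurable_prod _ fun i _ => (measurable_gaussianPDF _ _).comp (measurable_pi_apply i)
  have hcoe : ⇑(EuclideanSpace.equiv (Fin d) ℝ).symm
      = ⇑(MeasurableEquiv.toLp 2 (Fin d → ℝ)) := rfl
  have hmp : MeasurePreserving (⇑(MeasurableEquiv.toLp 2 (Fin d → ℝ)))
      (volume : Measure (Fin d → ℝ)) volume :=
    MeasurePreserving.symm _ (EuclideanSpace.volume_preserving_symm_measurableEquiv_toLp (Fin d))
  rw [gaussPi, pi_gaussian_eq hσ, hcoe,
    map_withDensity_equiv _ (MeasurableEquiv.toLp 2 (Fin d → ℝ)) _ hmeasD,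
    hmp.map_eq]
  congr 1
  funext z
  have hz : ∀ i, ((MeasurableEquiv.toLp 2 (Fin d → ℝ)).symm z) i = z i :=
    fun _ => rfl
  simp only [hz]
  rw [← prod_gaussianPDFReal hσ z,
    ENNReal.ofReal_prod_of_nonneg fun i _ => gaussianPDFReal_nonneg _ _ _]
  rfl


theorem gaussPi_univ : gaussPi d σ Set.univ = 1 := by
  rw [gaussPi, Measure.map_apply
    (EuclideanSpace.equiv (Fin d) ℝ).symm.continuous.measurable MeasurableSet.univ]
  simp

theorem gaussPi_map_isometry (hσ : 0 < σ)
    (e : EuclideanSpace ℝ (Fin d) ≃ₗᵢ[ℝ] EuclideanSpace ℝ (Fin d)) :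
    (gaussPi d σ).map e = gaussPi d σ := by
  have hmeasρ : Measurable fun z : EuclideanSpace ℝ (Fin d) => ENNReal.ofReal (phiD d σ z) :=
    phiD_continuous.measurable.ennreal_ofReal
  have hcoe : ⇑e = ⇑e.toMeasurableEquiv := rfl
  rw [gaussPi_eq hσ, hcoe, map_withDensity_equiv _ e.toMeasurableEquiv _ hmeasρ,
    show Measure.map ⇑e.toMeasurableEquiv volume = volume from e.measurePreserving.map_eq]
  congr 1
  funext z
  have h1 : e.toMeasurableEquiv.symm z = e.symm z := rfl
  rw [h1]
  unfold phiD
  rw [e.symm.norm_map]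

theorem gaussPi_coord (i : Fin d) {A : Set ℝ} (hA : MeasurableSet A) :
    gaussPi d σ {z | z i ∈ A} = gaussianReal 0 (Real.toNNReal (σ ^ 2)) A := by
  classical
  have hset : MeasurableSet {z : EuclideanSpace ℝ (Fin d) | z i ∈ A} := by
    exact (EuclideanSpace.proj (𝕜 := ℝ) i).continuous.measurable hA
  rw [gaussPi, Measure.map_apply
    (EuclideanSpace.equiv (Fin d) ℝ).symm.continuous.measurable hset]
  have hpre : (⇑(EuclideanSpace.equiv (Fin d) ℝ).symm) ⁻¹' {z | z i ∈ A}
      = Function.eval i ⁻¹' A := rfl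
  rw [hpre, Set.eval_preimage, Measure.pi_pi]
  rw [Fintype.prod_eq_single i
    (fun j hj => by rw [Function.update_of_ne hj]; exact measure_univ)]
  rw [Function.update_self]


theorem gaussPi_inner (hσ : 0 < σ) {v : EuclideanSpace ℝ (Fin d)} (hv : v ≠ 0) (r : ℝ) :
    gaussPi d σ {z | r ≤ ⟪z, v⟫}
      = gaussianReal 0 (Real.toNNReal (σ ^ 2)) (Set.Ici (r / ‖v‖)) := by
  classical
  rcases Nat.eq_zero_or_pos d with hd | hd
  · subst hd
    exact absurd (Subsingleton.elim v 0) hv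
  set i0 : Fin d := ⟨0, hd⟩
  have hnv : (0 : ℝ) < ‖v‖ := norm_pos_iff.2 hv
  set u : EuclideanSpace ℝ (Fin d) := ‖v‖⁻¹ • v with hu_def
  have hu : ‖u‖ = 1 := by
    rw [hu_def, norm_smul, norm_inv, norm_norm, inv_mul_cancel₀ hnv.ne']
  have hcard : Module.finrank ℝ (EuclideanSpace ℝ (Fin d)) = Fintype.card (Fin d) := by
    simp
  have horth : Orthonormal ℝ (Set.restrict {i0} (fun _ : Fin d => u)) := by
    constructor
    · intro p; exact hu
    · intro p q hpq
      exact absurd (Subsingleton.elim p q) hpq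
  obtain ⟨b, hb⟩ := horth.exists_orthonormalBasis_extension_of_card_eq hcard
  have hbu : b i0 = u := hb i0 rfl
  set e := b.repr.symm with he_def
  have he : e (EuclideanSpace.single i0 1) = u := by
    rw [he_def, b.repr_symm_single, hbu]
  set S : Set (EuclideanSpace ℝ (Fin d)) := {z | r / ‖v‖ ≤ ⟪z, u⟫} with hS_def
  have hSv : {z : EuclideanSpace ℝ (Fin d) | r ≤ ⟪z, v⟫} = S := by
    ext z
    simp only [hS_def, Set.mem_setOf_eq, hu_def, real_inner_smul_right]
    rw [div_eq_inv_mul]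
    exact (mul_le_mul_iff_right₀ (inv_pos.2 hnv)).symm
  have hS : MeasurableSet S :=
    measurableSet_le measurable_const
      ((continuous_id.inner continuous_const).measurable)
  have hpre : ⇑e ⁻¹' S = {z | z i0 ∈ Set.Ici (r / ‖v‖)} := by
    ext z
    simp only [Set.mem_preimage, hS_def, Set.mem_setOf_eq, Set.mem_Ici]
    rw [← he, e.inner_map_map]
    simp [EuclideanSpace.inner_single_right]
  rw [hSv, ← gaussPi_map_isometry hσ e, Measure.map_apply e.continuous.measurable hS,
    hpre, gaussPi_coord i0 measurableSet_Ici]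

theorem integral_Iic_gaussianPDFReal (x : ℝ) :
    ∫ t in Set.Iic x, gaussianPDFReal 0 1 t = Phi x := by
  unfold gaussianPDFReal Phi
  simp only [NNReal.coe_one, mul_one, sub_zero]
  rw [MeasureTheory.integral_const_mul]

theorem gaussianReal_Ici_toReal (hσ : 0 < σ) (a : ℝ) :
    (gaussianReal 0 (Real.toNNReal (σ ^ 2)) (Set.Ici a)).toReal = Phi (-(a / σ)) := by
  have hvar : (⟨σ ^ 2, sq_nonneg σ⟩ : ℝ≥0) * 1 = Real.toNNReal (σ ^ 2) := by
    ext
    simp [Real.coe_toNNReal _ (sq_nonneg σ)]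
  have hmap : (gaussianReal 0 1).map (σ * ·) = gaussianReal 0 (Real.toNNReal (σ ^ 2)) := by
    rw [gaussianReal_map_const_mul σ, mul_zero]
    exact congrArg _ hvar
  have hneg : (gaussianReal 0 1).map ((-1 : ℝ) * ·) = gaussianReal 0 1 := by
    rw [gaussianReal_map_const_mul (-1 : ℝ), mul_zero]
    congr 1
    ext
    norm_num
  have h1 : gaussianReal 0 (Real.toNNReal (σ ^ 2)) (Set.Ici a)
      = gaussianReal 0 1 (Set.Ici (a / σ)) := by
    rw [← hmap, Measure.map_apply (measurable_const_mul σ) measurableSet_Ici]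
    congr 1
    ext t
    simp only [Set.mem_preimage, Set.mem_Ici]
    rw [div_le_iff₀ hσ, mul_comm]
  have h2 : gaussianReal 0 1 (Set.Ici (a / σ)) = gaussianReal 0 1 (Set.Iic (-(a / σ))) := by
    conv_lhs => rw [← hneg]
    rw [Measure.map_apply (measurable_const_mul (-1 : ℝ)) measurableSet_Ici]
    congr 1
    ext t
    simp only [Set.mem_preimage, Set.mem_Ici, Set.mem_Iic, neg_one_mul]
    exact le_neg
  rw [h1, h2, gaussianReal_apply_eq_integral 0 one_ne_zero,
    ENNReal.toReal_ofReal
      (setIntegral_nonneg measurableSet_Iic fun t _ => gaussianPDFReal_nonneg _ _ _),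
    integral_Iic_gaussianPDFReal]


theorem measurable_rhoNN : Measurable fun z : EuclideanSpace ℝ (Fin d) =>
    Real.toNNReal (phiD d σ z) :=
  phiD_continuous.measurable.real_toNNReal

theorem integral_gaussPi (hσ : 0 < σ) {V : Type*} [NormedAddCommGroup V] [NormedSpace ℝ V]
    (f : EuclideanSpace ℝ (Fin d) → V) :
    ∫ z, f z ∂(gaussPi d σ) = ∫ z, phiD d σ z • f z := by
  have : gaussPi d σ = (volume : Measure (EuclideanSpace ℝ (Fin d))).withDensity
      (fun z => ((Real.toNNReal (phiD d σ z) : ℝ≥0) : ℝ≥0∞)) := gaussPi_eq hσ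
  rw [this, integral_withDensity_eq_integral_smul measurable_rhoNN f]
  congr 1
  funext z
  rw [NNReal.smul_def, Real.coe_toNNReal _ (phiD_nonneg z)]

theorem integral_phiD_smul (hσ : 0 < σ) {V : Type*} [NormedAddCommGroup V] [NormedSpace ℝ V]
    (c : EuclideanSpace ℝ (Fin d)) (f : EuclideanSpace ℝ (Fin d) → V) :
    ∫ z, phiD d σ (z - c) • f z = ∫ z, f (c + z) ∂(gaussPi d σ) := by
  rw [integral_gaussPi hσ]
  rw [← integral_add_right_eq_self (fun w => phiD d σ (w - c) • f w) c]
  simp only [add_sub_cancel_right]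
  congr 1
  funext z
  rw [add_comm]

theorem integral_phiD_indicator (hσ : 0 < σ) (c : EuclideanSpace ℝ (Fin d))
    {S : Set (EuclideanSpace ℝ (Fin d))} (hS : MeasurableSet S) :
    ∫ z, phiD d σ (z - c) • Set.indicator S (fun _ => (1 : ℝ)) z
      = (gaussPi d σ {z | c + z ∈ S}).toReal := by
  rw [integral_phiD_smul hσ c]
  have : (fun z => Set.indicator S (fun _ => (1 : ℝ)) (c + z))
      = Set.indicator {z | c + z ∈ S} (fun _ => (1 : ℝ)) := by
    funext z
    by_cases hz : c + z ∈ S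
    · simp [Set.indicator_apply, hz]
    · simp [Set.indicator_apply, hz]
  rw [this]
  exact MeasureTheory.integral_indicator_one (hS.preimage (measurable_const_add c))

theorem integral_phiD_translate (hσ : 0 < σ) (c : EuclideanSpace ℝ (Fin d)) :
    ∫ z, phiD d σ (z - c) = 1 := by
  have h := integral_phiD_indicator hσ c MeasurableSet.univ (d := d) (σ := σ)
  simpa [gaussPi_univ] using h

theorem integrable_phiD_translate (hσ : 0 < σ) (c : EuclideanSpace ℝ (Fin d)) :
    Integrable (fun z => phiD d σ (z - c)) := by
  have hmp : MeasurePreserving (fun z : EuclideanSpace ℝ (Fin d) => z - c) volume volume :=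
    measurePreserving_sub_right volume c
  have base : Integrable (phiD d σ) (volume : Measure (EuclideanSpace ℝ (Fin d))) := by
    constructor
    · exact phiD_continuous.aestronglyMeasurable
    · rw [MeasureTheory.hasFiniteIntegral_iff_norm]
      have heq : ∀ z : EuclideanSpace ℝ (Fin d),
          ENNReal.ofReal ‖phiD d σ z‖ = ENNReal.ofReal (phiD d σ z) := fun z => by
        rw [Real.norm_of_nonneg (phiD_nonneg z)]
      simp only [heq]
      have : ∫⁻ z, ENNReal.ofReal (phiD d σ z) ∂volume = gaussPi d σ Set.univ := by
        rw [gaussPi_eq hσ, withDensity_apply _ MeasurableSet.univ, Measure.restrict_univ]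
      rw [this, gaussPi_univ]
      exact ENNReal.one_lt_top
  exact hmp.integrable_comp base.aestronglyMeasurable |>.2 base


theorem phiD_le_phiD (hσ : 0 < σ) {z w : EuclideanSpace ℝ (Fin d)} (hzw : ‖z‖ ≤ ‖w‖) :
    phiD d σ w ≤ phiD d σ z := by
  unfold phiD
  have hC : (0:ℝ) ≤ ((Real.sqrt (2 * π * σ ^ 2))⁻¹) ^ d := by positivity
  apply mul_le_mul_of_nonneg_left _ hC
  apply Real.exp_le_exp.2
  have hsq : ‖z‖ ^ 2 ≤ ‖w‖ ^ 2 := by nlinarith [norm_nonneg z, norm_nonneg w]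
  have h2 : (0:ℝ) < 2 * σ ^ 2 := by positivity
  have : -‖w‖ ^ 2 ≤ -‖z‖ ^ 2 := by linarith
  gcongr

theorem gaussPi_halfspace_toReal (hσ : 0 < σ) {v : EuclideanSpace ℝ (Fin d)} (hv : v ≠ 0)
    (r : ℝ) :
    (gaussPi d σ {z | r ≤ ⟪z, v⟫}).toReal = Phi (-(r / ‖v‖ / σ)) := by
  rw [gaussPi_inner hσ hv r, gaussianReal_Ici_toReal hσ]

end SmoothAux

open SmoothAux

/-- the Gaussian-smoothed embedding satisfies
`‖g x − g y‖ ≤ 2F (Φ(‖x−y‖/(2σ)) − Φ(−‖x−y‖/(2σ)))`. -/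
theorem smoothed_embedding_bound {d k : ℕ}
    (h : EuclideanSpace ℝ (Fin d) → EuclideanSpace ℝ (Fin k)) (hmeas : Measurable h)
    (F σ : ℝ) (hF : ∀ z, ‖h z‖ ≤ F) (hσ : 0 < σ)
    (g : EuclideanSpace ℝ (Fin d) → EuclideanSpace ℝ (Fin k))
    (hg : ∀ x, g x = ∫ z, h (x + z) ∂(gaussPi d σ)) :
    ∀ x y : EuclideanSpace ℝ (Fin d),
      ‖g x - g y‖ ≤ 2 * F * (Phi (‖x - y‖ / (2 * σ)) - Phi (-‖x - y‖ / (2 * σ))) := by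
  intro x y
  by_cases hxy : x = y
  · subst hxy
    simp
  set v := x - y with hv_def
  have hv : v ≠ 0 := sub_ne_zero.2 hxy
  have hnv : (0:ℝ) < ‖v‖ := norm_pos_iff.2 hv
  set m := ‖v‖ / (2 * σ) with hm_def
  have Iφx := integrable_phiD_translate hσ x
  have Iφy := integrable_phiD_translate hσ y
  -- representation of g
  have hgx : ∀ c : EuclideanSpace ℝ (Fin d), g c = ∫ z, phiD d σ (z - c) • h z := by
    intro c
    rw [hg c, ← integral_phiD_smul hσ c h]
  -- integrability
  have Ih : ∀ c : EuclideanSpace ℝ (Fin d),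
      Integrable (fun z => phiD d σ (z - c) • h z) := by
    intro c
    refine Integrable.mono' ((integrable_phiD_translate hσ c).mul_const F) ?_ ?_
    · exact ((phiD_continuous.comp
        (continuous_id.sub continuous_const)).measurable.aestronglyMeasurable).smul
        hmeas.aestronglyMeasurable
    · refine Filter.Eventually.of_forall fun z => ?_
      rw [norm_smul, Real.norm_of_nonneg (phiD_nonneg _)]
      exact mul_le_mul_of_nonneg_left (hF z) (phiD_nonneg _)
  set Δ := fun z : EuclideanSpace ℝ (Fin d) =>
    phiD d σ (z - x) - phiD d σ (z - y) with hΔ_def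
  have IΔ : Integrable Δ := Iφx.sub Iφy
  have hsub : g x - g y = ∫ z, Δ z • h z := by
    rw [hgx x, hgx y, ← integral_sub (Ih x) (Ih y)]
    congr 1
    funext z
    rw [hΔ_def, sub_smul]
  have hF0 : (0:ℝ) ≤ F := le_trans (norm_nonneg (h 0)) (hF 0)
  have step1 : ‖g x - g y‖ ≤ ∫ z, |Δ z| * F := by
    rw [hsub]
    refine le_trans (norm_integral_le_integral_norm _) ?_
    have Inorm : Integrable (fun z => ‖Δ z • h z‖) :=
      ((Ih x).sub (Ih y)).norm.congr (Filter.Eventually.of_forall fun z => by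
        show ‖phiD d σ (z - x) • h z - phiD d σ (z - y) • h z‖ = ‖Δ z • h z‖
        rw [hΔ_def, sub_smul])
    refine integral_mono Inorm (IΔ.abs.mul_const F) fun z => ?_
    show ‖Δ z • h z‖ ≤ |Δ z| * F
    rw [norm_smul, Real.norm_eq_abs]
    exact mul_le_mul_of_nonneg_left (hF z) (abs_nonneg _)
  -- the halfspace A
  set cc := (‖x‖^2 - ‖y‖^2)/2 with hcc_def
  set A := {z : EuclideanSpace ℝ (Fin d) | cc ≤ ⟪z, v⟫} with hA_def
  have hA : MeasurableSet A :=
    measurableSet_le measurable_const ((continuous_id.inner continuous_const).measurable)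
  have hnormiff : ∀ z : EuclideanSpace ℝ (Fin d), cc ≤ ⟪z, v⟫ ↔ ‖z - x‖ ≤ ‖z - y‖ := by
    intro z
    have e1 : ‖z - x‖^2 = ‖z‖^2 - 2 * ⟪z, x⟫ + ‖x‖^2 := norm_sub_sq_real z x
    have e2 : ‖z - y‖^2 = ‖z‖^2 - 2 * ⟪z, y⟫ + ‖y‖^2 := norm_sub_sq_real z y
    have e3 : ⟪z, v⟫ = ⟪z, x⟫ - ⟪z, y⟫ := by rw [hv_def, inner_sub_right]
    constructor
    · intro hcc
      have hsq : ‖z - x‖^2 ≤ ‖z - y‖^2 := by rw [e1, e2]; rw [e3] at hcc; linarith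
      nlinarith [norm_nonneg (z - x), norm_nonneg (z - y)]
    · intro hn
      have hsq : ‖z - x‖^2 ≤ ‖z - y‖^2 := by nlinarith [norm_nonneg (z - x)]
      rw [e1, e2] at hsq
      rw [e3]
      linarith
  have hsign : ∀ z ∈ A, phiD d σ (z - y) ≤ phiD d σ (z - x) :=
    fun z hz => phiD_le_phiD hσ ((hnormiff z).1 hz)
  have hsign' : ∀ z ∉ A, phiD d σ (z - x) ≤ phiD d σ (z - y) :=
    fun z hz => phiD_le_phiD hσ (le_of_not_ge (mt (hnormiff z).2 hz))
  -- set integrals of the two densities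
  have key : ∀ c : EuclideanSpace ℝ (Fin d),
      ∫ z in A, phiD d σ (z - c) = (gaussPi d σ {z | cc - ⟪c, v⟫ ≤ ⟪z, v⟫}).toReal := by
    intro c
    have h1 : ∫ z in A, phiD d σ (z - c)
        = ∫ z, phiD d σ (z - c) • Set.indicator A (fun _ => (1:ℝ)) z := by
      rw [← MeasureTheory.integral_indicator hA]
      congr 1
      funext z
      by_cases hz : z ∈ A
      · simp [Set.indicator_apply, hz]
      · simp [Set.indicator_apply, hz]
    rw [h1, integral_phiD_indicator hσ c hA]
    congr 2
    ext z
    simp only [hA_def, Set.mem_setOf_eq, inner_add_left]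
    constructor <;> intro <;> linarith
  have hcx : cc - ⟪x, v⟫ = -(‖v‖^2/2) := by
    have h1 : ⟪x, v⟫ = ‖x‖^2 - ⟪x, y⟫ := by
      rw [hv_def, inner_sub_right, real_inner_self_eq_norm_sq]
    have h2 : ‖v‖^2 = ‖x‖^2 - 2*⟪x, y⟫ + ‖y‖^2 := by
      rw [hv_def]; exact norm_sub_sq_real x y
    rw [hcc_def, h1, h2]; ring
  have hcy : cc - ⟪y, v⟫ = ‖v‖^2/2 := by
    have h1 : ⟪y, v⟫ = ⟪x, y⟫ - ‖y‖^2 := by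
      rw [hv_def, inner_sub_right, real_inner_self_eq_norm_sq, real_inner_comm]
    have h2 : ‖v‖^2 = ‖x‖^2 - 2*⟪x, y⟫ + ‖y‖^2 := by
      rw [hv_def]; exact norm_sub_sq_real x y
    rw [hcc_def, h1, h2]; ring
  have hAx : ∫ z in A, phiD d σ (z - x) = Phi m := by
    rw [key x, hcx, gaussPi_halfspace_toReal hσ hv]
    congr 1
    rw [hm_def]
    field_simp
  have hAy : ∫ z in A, phiD d σ (z - y) = Phi (-m) := by
    rw [key y, hcy, gaussPi_halfspace_toReal hσ hv]
    congr 1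
    rw [hm_def]
    field_simp
  have hAxc : ∫ z in Aᶜ, phiD d σ (z - x) = 1 - Phi m := by
    have htot := MeasureTheory.integral_add_compl hA Iφx
    rw [integral_phiD_translate hσ x] at htot
    linarith [hAx, htot]
  have hAyc : ∫ z in Aᶜ, phiD d σ (z - y) = 1 - Phi (-m) := by
    have htot := MeasureTheory.integral_add_compl hA Iφy
    rw [integral_phiD_translate hσ y] at htot
    linarith [hAy, htot]
  have habs : ∫ z, |Δ z| = 2 * (Phi m - Phi (-m)) := by
    rw [← MeasureTheory.integral_add_compl hA IΔ.abs]
    have hA1 : ∫ z in A, |Δ z| = ∫ z in A, Δ z :=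
      setIntegral_congr_fun hA fun z hz => abs_of_nonneg (sub_nonneg.2 (hsign z hz))
    have hA2 : ∫ z in Aᶜ, |Δ z|
        = ∫ z in Aᶜ, (phiD d σ (z - y) - phiD d σ (z - x)) :=
      setIntegral_congr_fun hA.compl fun z hz => by
        rw [hΔ_def]
        rw [abs_of_nonpos (sub_nonpos.2 (hsign' z hz)), neg_sub]
    rw [hA1, hA2]
    have hsubA : ∫ z in A, Δ z
        = (∫ z in A, phiD d σ (z - x)) - ∫ z in A, phiD d σ (z - y) :=
      integral_sub Iφx.integrableOn Iφy.integrableOn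
    have hsubAc : ∫ z in Aᶜ, (phiD d σ (z - y) - phiD d σ (z - x))
        = (∫ z in Aᶜ, phiD d σ (z - y)) - ∫ z in Aᶜ, phiD d σ (z - x) :=
      integral_sub Iφy.integrableOn Iφx.integrableOn
    rw [hsubA, hsubAc, hAx, hAy, hAxc, hAyc]
    ring
  have step2 : ∫ z, |Δ z| * F = 2 * (Phi m - Phi (-m)) * F := by
    rw [MeasureTheory.integral_mul_const, habs]
  calc ‖g x - g y‖ ≤ ∫ z, |Δ z| * F := step1
    _ = 2 * (Phi m - Phi (-m)) * F := step2
    _ = 2 * F * (Phi (‖x - y‖ / (2 * σ)) - Phi (-‖x - y‖ / (2 * σ))) := by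
        rw [hm_def, hv_def, neg_div]
        ring
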